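/- If a subset T ⊆ N is not contained in D', the unique largest weakly decodable subset of N, then G(T) is strictly less than the maximum of G over all subsets of N: G(T) < max over T' ⊆ N of G(T'). -/

import Mathlib

open scoped BigOperators

/-- Shannon entropy (natural log) of a random variable `X` on a finite sample
space `Ω` with probability mass function `μ`. -/
noncomputable def entropy {Ω α : Type*} [Fintype Ω] [Fintype α] [DecidableEq α]
    (μ : Ω → ℝ) (X : Ω → α) : ℝ :=
  ∑ a : α, Real.negMulLog (∑ ω ∈ Finset.univ.filter (fun ω => X ω = a), μ ω)

/-- Conditional mutual information `I(X;Y|Z)` for random variables on a finite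
sample space with pmf `μ`. -/
noncomputable def condMI {Ω α β γ : Type*} [Fintype Ω]
    [Fintype α] [DecidableEq α] [Fintype β] [DecidableEq β] [Fintype γ] [DecidableEq γ]
    (μ : Ω → ℝ) (X : Ω → α) (Y : Ω → β) (Z : Ω → γ) : ℝ :=
  entropy μ (fun ω => (X ω, Z ω)) + entropy μ (fun ω => (Y ω, Z ω))
    - entropy μ (fun ω => (X ω, Y ω, Z ω)) - entropy μ Z

set_option synthInstance.maxSize 2048
set_option maxHeartbeats 1600000

section Generic
variable {Ω : Type*} [Fintype Ω] {μ : Ω → ℝ}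

lemma entropy_eq_sum_image {α : Type*} [Fintype α] [DecidableEq α] (X : Ω → α) :
    entropy μ X = ∑ a ∈ Finset.univ.image X,
      Real.negMulLog (∑ ω ∈ Finset.univ.filter (fun ω => X ω = a), μ ω) := by
  rw [entropy]
  refine (Finset.sum_subset (Finset.subset_univ _) ?_).symm
  intro a _ ha
  have h0 : Finset.univ.filter (fun ω => X ω = a) = ∅ := by
    ext ω
    simp only [Finset.mem_filter, Finset.mem_univ, true_and, Finset.notMem_empty, iff_false]
    intro h
    exact ha (Finset.mem_image.mpr ⟨ω, Finset.mem_univ ω, h⟩)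
  rw [h0]
  simp [Real.negMulLog_zero]

lemma entropy_congr {α β : Type*} [Fintype α] [DecidableEq α] [Fintype β] [DecidableEq β]
    {X : Ω → α} {Y : Ω → β} (h : ∀ ω ω', X ω = X ω' ↔ Y ω = Y ω') :
    entropy μ X = entropy μ Y := by
  rcases isEmpty_or_nonempty Ω with hΩ | hΩ
  · have hu : (Finset.univ : Finset Ω) = ∅ := Finset.univ_eq_empty
    simp [entropy, hu, Real.negMulLog_zero]
  · classical
    set pX : α → Ω := fun a => if h : ∃ ω, X ω = a then h.choose else Classical.arbitrary Ω
      with hpX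
    set pY : β → Ω := fun b => if h : ∃ ω, Y ω = b then h.choose else Classical.arbitrary Ω
      with hpY
    have hfX : ∀ a ∈ Finset.univ.image X, X (pX a) = a := by
      intro a ha
      obtain ⟨ω, -, hω⟩ := Finset.mem_image.mp ha
      have he : ∃ ω, X ω = a := ⟨ω, hω⟩
      simp only [hpX, dif_pos he]
      exact he.choose_spec
    have hfY : ∀ b ∈ Finset.univ.image Y, Y (pY b) = b := by
      intro b hb
      obtain ⟨ω, -, hω⟩ := Finset.mem_image.mp hb
      have he : ∃ ω, Y ω = b := ⟨ω, hω⟩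
      simp only [hpY, dif_pos he]
      exact he.choose_spec
    rw [entropy_eq_sum_image X, entropy_eq_sum_image Y]
    refine Finset.sum_nbij' (fun a => Y (pX a)) (fun b => X (pY b)) ?_ ?_ ?_ ?_ ?_
    · intro a _
      exact Finset.mem_image.mpr ⟨_, Finset.mem_univ _, rfl⟩
    · intro b _
      exact Finset.mem_image.mpr ⟨_, Finset.mem_univ _, rfl⟩
    · intro a ha
      have h1 : Y (pY (Y (pX a))) = Y (pX a) :=
        hfY _ (Finset.mem_image.mpr ⟨_, Finset.mem_univ _, rfl⟩)
      have h2 : X (pY (Y (pX a))) = X (pX a) := (h _ _).mpr h1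
      show X (pY (Y (pX a))) = a
      rw [h2, hfX a ha]
    · intro b hb
      have h1 : X (pX (X (pY b))) = X (pY b) :=
        hfX _ (Finset.mem_image.mpr ⟨_, Finset.mem_univ _, rfl⟩)
      have h2 : Y (pX (X (pY b))) = Y (pY b) := (h _ _).mp h1
      show Y (pX (X (pY b))) = b
      rw [h2, hfY b hb]
    · intro a ha
      congr 1
      apply Finset.sum_congr _ (fun _ _ => rfl)
      ext ω'
      simp only [Finset.mem_filter, Finset.mem_univ, true_and]
      constructor
      · intro hx
        exact (h ω' (pX a)).mp (hx.trans (hfX a ha).symm)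
      · intro hy
        exact ((h ω' (pX a)).mpr hy).trans (hfX a ha)

end Generic


section Generic2
variable {Ω : Type*} [Fintype Ω] {μ : Ω → ℝ}
variable {α β γ α' β' γ' δ : Type*}
  [Fintype α] [DecidableEq α] [Fintype β] [DecidableEq β] [Fintype γ] [DecidableEq γ]
  [Fintype α'] [DecidableEq α'] [Fintype β'] [DecidableEq β'] [Fintype γ'] [DecidableEq γ']
  [Fintype δ] [DecidableEq δ]

/-- Equivalence of random variables: same fibers. -/
def EqvRV (X : Ω → α) (Y : Ω → β) : Prop := ∀ ω ω', X ω = X ω' ↔ Y ω = Y ω'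

lemma condMI_congr {X : Ω → α} {Y : Ω → β} {Z : Ω → γ}
    {X' : Ω → α'} {Y' : Ω → β'} {Z' : Ω → γ'}
    (hX : EqvRV X X') (hY : EqvRV Y Y') (hZ : EqvRV Z Z') :
    condMI μ X Y Z = condMI μ X' Y' Z' := by
  unfold condMI
  rw [entropy_congr (μ := μ) (X := fun ω => (X ω, Z ω)) (Y := fun ω => (X' ω, Z' ω))
      (by intro ω ω'; simp only [Prod.mk.injEq]; rw [hX ω ω', hZ ω ω']),
    entropy_congr (μ := μ) (X := fun ω => (Y ω, Z ω)) (Y := fun ω => (Y' ω, Z' ω))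
      (by intro ω ω'; simp only [Prod.mk.injEq]; rw [hY ω ω', hZ ω ω']),
    entropy_congr (μ := μ) (X := fun ω => (X ω, Y ω, Z ω)) (Y := fun ω => (X' ω, Y' ω, Z' ω))
      (by intro ω ω'; simp only [Prod.mk.injEq]; rw [hX ω ω', hY ω ω', hZ ω ω']),
    entropy_congr (μ := μ) (X := Z) (Y := Z') hZ]

lemma condMI_symm (X : Ω → α) (Y : Ω → β) (Z : Ω → γ) :
    condMI μ X Y Z = condMI μ Y X Z := by
  unfold condMI
  rw [entropy_congr (μ := μ) (X := fun ω => (X ω, Y ω, Z ω)) (Y := fun ω => (Y ω, X ω, Z ω))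
      (by intro ω ω'; simp only [Prod.mk.injEq]; tauto)]
  ring

/-- Chain rule in the first argument. -/
lemma condMI_chain_left (X : Ω → α) (X' : Ω → α') (Y : Ω → β) (Z : Ω → γ) :
    condMI μ (fun ω => (X ω, X' ω)) Y Z
      = condMI μ X Y Z + condMI μ X' Y (fun ω => (X ω, Z ω)) := by
  unfold condMI
  rw [entropy_congr (μ := μ) (X := fun ω => ((X ω, X' ω), Z ω))
      (Y := fun ω => (X' ω, X ω, Z ω))
      (by intro ω ω'; simp only [Prod.mk.injEq]; tauto),
    entropy_congr (μ := μ) (X := fun ω => ((X ω, X' ω), Y ω, Z ω))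
      (Y := fun ω => (X' ω, Y ω, X ω, Z ω))
      (by intro ω ω'; simp only [Prod.mk.injEq]; tauto),
    entropy_congr (μ := μ) (X := fun ω => (X ω, Y ω, Z ω))
      (Y := fun ω => (Y ω, X ω, Z ω))
      (by intro ω ω'; simp only [Prod.mk.injEq]; tauto)]
  ring

/-- Chain rule in the second argument. -/
lemma condMI_chain_right (X : Ω → α) (Y : Ω → β) (Y' : Ω → β') (Z : Ω → γ) :
    condMI μ X (fun ω => (Y ω, Y' ω)) Z
      = condMI μ X Y Z + condMI μ X Y' (fun ω => (Y ω, Z ω)) := by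
  rw [condMI_symm, condMI_chain_left, condMI_symm Y X Z, condMI_symm Y' X]

end Generic2


section Gibbs
open Real

lemma negMulLog_eq' (x : ℝ) : Real.negMulLog x = -(x * Real.log x) := by
  unfold Real.negMulLog; ring

lemma gibbs2 {α β : Type*} [Fintype α] [Fintype β] (q : α → β → ℝ) (hq : ∀ a b, 0 ≤ q a b) :
    ∑ a, ∑ b, Real.negMulLog (q a b) + Real.negMulLog (∑ a, ∑ b, q a b)
      ≤ ∑ a, Real.negMulLog (∑ b, q a b) + ∑ b, Real.negMulLog (∑ a, q a b) := by
  classical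
  obtain ⟨m, hm⟩ : ∃ m : ℝ, m = ∑ a, ∑ b, q a b := ⟨_, rfl⟩
  obtain ⟨qA, hqA⟩ : ∃ qA : α → ℝ, qA = fun a => ∑ b, q a b := ⟨_, rfl⟩
  obtain ⟨qB, hqB⟩ : ∃ qB : β → ℝ, qB = fun b => ∑ a, q a b := ⟨_, rfl⟩
  have hqAa : ∀ a, qA a = ∑ b, q a b := fun a => by rw [hqA]
  have hqBb : ∀ b, qB b = ∑ a, q a b := fun b => by rw [hqB]
  have g1 : ∑ a, Real.negMulLog (∑ b, q a b) = ∑ a, Real.negMulLog (qA a) :=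
    Finset.sum_congr rfl fun a _ => by rw [hqAa a]
  have g2 : ∑ b, Real.negMulLog (∑ a, q a b) = ∑ b, Real.negMulLog (qB b) :=
    Finset.sum_congr rfl fun b _ => by rw [hqBb b]
  rw [← hm, g1, g2]
  have hqAnn : ∀ a, 0 ≤ qA a := fun a => (hqAa a) ▸ Finset.sum_nonneg fun b _ => hq a b
  have hqBnn : ∀ b, 0 ≤ qB b := fun b => (hqBb b) ▸ Finset.sum_nonneg fun a _ => hq a b
  have hsumA : ∑ a, qA a = m := by rw [hqA, hm]
  have hsumB : ∑ b, qB b = m := by rw [hqB, hm]; exact Finset.sum_comm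
  have hmnn : 0 ≤ m := by
    rw [hm]; exact Finset.sum_nonneg fun a _ => Finset.sum_nonneg fun b _ => hq a b
  rcases eq_or_lt_of_le hmnn with hm0 | hmpos
  · have hz : ∀ a b, q a b = 0 := by
      intro a b
      have h1 : ∀ a ∈ (Finset.univ : Finset α), (∑ b, q a b) = 0 :=
        (Finset.sum_eq_zero_iff_of_nonneg
          (fun a _ => Finset.sum_nonneg fun b _ => hq a b)).mp (hm.symm.trans hm0.symm)
      have h2 : ∀ b ∈ (Finset.univ : Finset β), q a b = 0 :=
        (Finset.sum_eq_zero_iff_of_nonneg (fun b _ => hq a b)).mp (h1 a (Finset.mem_univ a))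
      exact h2 b (Finset.mem_univ b)
    have hza : ∀ a, qA a = 0 := by intro a; rw [hqAa a]; simp [hz]
    have hzb : ∀ b, qB b = 0 := by intro b; rw [hqBb b]; simp [hz]
    simp [hz, hza, hzb, ← hm0, Real.negMulLog_zero]
  · -- main case
    have hE : ∑ a, Real.negMulLog (qA a) + ∑ b, Real.negMulLog (qB b)
        - ∑ a, ∑ b, Real.negMulLog (q a b) - Real.negMulLog m
        = ∑ a, ∑ b, (q a b * Real.log (q a b) + q a b * Real.log m
            - q a b * Real.log (qA a) - q a b * Real.log (qB b)) := by
      have e1 : ∑ a, Real.negMulLog (qA a) = ∑ a, ∑ b, -(q a b * Real.log (qA a)) := by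
        refine Finset.sum_congr rfl fun a _ => ?_
        calc Real.negMulLog (qA a) = -(qA a * Real.log (qA a)) := negMulLog_eq' _
          _ = -((∑ b, q a b) * Real.log (qA a)) := by rw [← hqAa a]
          _ = -(∑ b, q a b * Real.log (qA a)) := by rw [Finset.sum_mul]
          _ = ∑ b, -(q a b * Real.log (qA a)) := by rw [← Finset.sum_neg_distrib]
      have e2 : ∑ b, Real.negMulLog (qB b) = ∑ a, ∑ b, -(q a b * Real.log (qB b)) := by
        rw [Finset.sum_comm]
        refine Finset.sum_congr rfl fun b _ => ?_
        calc Real.negMulLog (qB b) = -(qB b * Real.log (qB b)) := negMulLog_eq' _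
          _ = -((∑ a, q a b) * Real.log (qB b)) := by rw [← hqBb b]
          _ = -(∑ a, q a b * Real.log (qB b)) := by rw [Finset.sum_mul]
          _ = ∑ a, -(q a b * Real.log (qB b)) := by rw [← Finset.sum_neg_distrib]
      have e3 : Real.negMulLog m = ∑ a, ∑ b, -(q a b * Real.log m) := by
        calc Real.negMulLog m = -(m * Real.log m) := negMulLog_eq' _
          _ = -((∑ a, ∑ b, q a b) * Real.log m) := by rw [← hm]
          _ = -(∑ a, (∑ b, q a b) * Real.log m) := by rw [Finset.sum_mul]
          _ = -(∑ a, ∑ b, q a b * Real.log m) := by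
              congr 1; exact Finset.sum_congr rfl fun a _ => Finset.sum_mul _ _ _
          _ = ∑ a, -(∑ b, q a b * Real.log m) := by rw [← Finset.sum_neg_distrib]
          _ = ∑ a, ∑ b, -(q a b * Real.log m) := by
              exact Finset.sum_congr rfl fun a _ => (Finset.sum_neg_distrib _).symm
      rw [e1, e2, e3]
      simp only [← Finset.sum_add_distrib, ← Finset.sum_sub_distrib]
      refine Finset.sum_congr rfl fun a _ => ?_
      refine Finset.sum_congr rfl fun b _ => ?_
      simp only [negMulLog_eq']
      ring
    have hpt : ∀ a b, q a b - qA a * qB b / m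
        ≤ q a b * Real.log (q a b) + q a b * Real.log m
          - q a b * Real.log (qA a) - q a b * Real.log (qB b) := by
      intro a b
      rcases eq_or_lt_of_le (hq a b) with h0 | hpos
      · rw [← h0]
        simp only [zero_mul, add_zero, sub_zero, zero_sub, zero_add, zero_div]
        have h1 : 0 ≤ qA a * qB b / m := by
          apply div_nonneg _ (le_of_lt hmpos)
          exact mul_nonneg (hqAnn a) (hqBnn b)
        linarith
      · have hqa : 0 < qA a := by
          rw [hqAa a]
          exact lt_of_lt_of_le hpos (Finset.single_le_sum (fun b' _ => hq a b') (Finset.mem_univ b))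
        have hqb : 0 < qB b := by
          rw [hqBb b]
          exact lt_of_lt_of_le hpos (Finset.single_le_sum (fun a' _ => hq a' b) (Finset.mem_univ a))
        have hx : (0:ℝ) < qA a * qB b / (m * q a b) := by positivity
        have hlog := Real.log_le_sub_one_of_pos hx
        rw [Real.log_div (by positivity) (by positivity), Real.log_mul (ne_of_gt hqa)
          (ne_of_gt hqb), Real.log_mul (ne_of_gt hmpos) (ne_of_gt hpos)] at hlog
        have hmul := mul_le_mul_of_nonneg_left hlog (le_of_lt hpos)
        have hid : q a b * (qA a * qB b / (m * q a b) - 1) = qA a * qB b / m - q a b := by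
          field_simp
        rw [hid] at hmul
        nlinarith [hmul]
    have hsum : ∑ a, ∑ b, (q a b - qA a * qB b / m)
        ≤ ∑ a, ∑ b, (q a b * Real.log (q a b) + q a b * Real.log m
            - q a b * Real.log (qA a) - q a b * Real.log (qB b)) :=
      Finset.sum_le_sum fun a _ => Finset.sum_le_sum fun b _ => hpt a b
    have hrsum : ∑ a, ∑ b, (qA a * qB b / m) = m := by
      have h1 : ∑ a, ∑ b, (qA a * qB b / m) = (∑ a, ∑ b, qA a * qB b) / m := by
        simp only [← Finset.sum_div]
      have h2 : (∑ a, qA a) * (∑ b, qB b) = ∑ a, ∑ b, qA a * qB b :=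
        Finset.sum_mul_sum _ _ _ _
      rw [h1, ← h2, hsumA, hsumB]
      field_simp
    have hzero : ∑ a, ∑ b, (q a b - qA a * qB b / m) = 0 := by
      simp only [Finset.sum_sub_distrib]
      rw [hrsum, ← hm]
      ring
    rw [hzero] at hsum
    rw [← hE] at hsum
    linarith

lemma gibbs3 {α β γ : Type*} [Fintype α] [Fintype β] [Fintype γ]
    (F : α → β → γ → ℝ) (hF : ∀ a b c, 0 ≤ F a b c) :
    ∑ a, ∑ b, ∑ c, Real.negMulLog (F a b c) + ∑ c, Real.negMulLog (∑ a, ∑ b, F a b c)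
      ≤ ∑ a, ∑ c, Real.negMulLog (∑ b, F a b c)
        + ∑ b, ∑ c, Real.negMulLog (∑ a, F a b c) := by
  have h1 : ∑ a, ∑ b, ∑ c, Real.negMulLog (F a b c)
      = ∑ c, ∑ a, ∑ b, Real.negMulLog (F a b c) := by
    calc ∑ a, ∑ b, ∑ c, Real.negMulLog (F a b c)
        = ∑ a, ∑ c, ∑ b, Real.negMulLog (F a b c) :=
          Finset.sum_congr rfl fun a _ => Finset.sum_comm
      _ = ∑ c, ∑ a, ∑ b, Real.negMulLog (F a b c) := Finset.sum_comm
  have h2 : ∑ a, ∑ c, Real.negMulLog (∑ b, F a b c)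
      = ∑ c, ∑ a, Real.negMulLog (∑ b, F a b c) := Finset.sum_comm
  have h3 : ∑ b, ∑ c, Real.negMulLog (∑ a, F a b c)
      = ∑ c, ∑ b, Real.negMulLog (∑ a, F a b c) := Finset.sum_comm
  have h4 : ∑ c, (∑ a, ∑ b, Real.negMulLog (F a b c))
        + ∑ c, Real.negMulLog (∑ a, ∑ b, F a b c)
      = ∑ c, ((∑ a, ∑ b, Real.negMulLog (F a b c))
        + Real.negMulLog (∑ a, ∑ b, F a b c)) := Finset.sum_add_distrib.symm
  have h5 : ∑ c, (∑ a, Real.negMulLog (∑ b, F a b c))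
        + ∑ c, (∑ b, Real.negMulLog (∑ a, F a b c))
      = ∑ c, ((∑ a, Real.negMulLog (∑ b, F a b c))
        + ∑ b, Real.negMulLog (∑ a, F a b c)) := Finset.sum_add_distrib.symm
  rw [h1, h2, h3, h4, h5]
  exact Finset.sum_le_sum fun c _ => gibbs2 (fun a b => F a b c) (fun a b => hF a b c)

end Gibbs


section Nonneg
variable {Ω : Type*} [Fintype Ω] {μ : Ω → ℝ}

lemma mass_congr {P Q : Ω → Prop} [DecidablePred P] [DecidablePred Q] (h : ∀ ω, P ω ↔ Q ω) :
    ∑ ω ∈ Finset.univ.filter P, μ ω = ∑ ω ∈ Finset.univ.filter Q, μ ω := by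
  rw [Finset.filter_congr (fun ω _ => h ω)]

lemma mass_split {β : Type*} [Fintype β] [DecidableEq β]
    {P : Ω → Prop} [DecidablePred P] (Y : Ω → β) :
    ∑ ω ∈ Finset.univ.filter P, μ ω
      = ∑ b, ∑ ω ∈ Finset.univ.filter (fun ω => P ω ∧ Y ω = b), μ ω := by
  rw [← Finset.sum_fiberwise_of_maps_to (fun ω _ => Finset.mem_univ (Y ω)) μ]
  exact Finset.sum_congr rfl fun b _ => by rw [Finset.filter_filter]

lemma condMI_nonneg {α β γ : Type*}
    [Fintype α] [DecidableEq α] [Fintype β] [DecidableEq β] [Fintype γ] [DecidableEq γ]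
    (hμ : ∀ ω, 0 ≤ μ ω) (X : Ω → α) (Y : Ω → β) (Z : Ω → γ) :
    0 ≤ condMI μ X Y Z := by
  classical
  obtain ⟨F, hF⟩ : ∃ F : α → β → γ → ℝ, F = fun a b c =>
      ∑ ω ∈ Finset.univ.filter (fun ω => X ω = a ∧ Y ω = b ∧ Z ω = c), μ ω := ⟨_, rfl⟩
  have hFabc : ∀ a b c, F a b c
      = ∑ ω ∈ Finset.univ.filter (fun ω => X ω = a ∧ Y ω = b ∧ Z ω = c), μ ω :=
    fun a b c => by rw [hF]
  have hFnn : ∀ a b c, 0 ≤ F a b c := fun a b c => by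
    rw [hFabc]; exact Finset.sum_nonneg fun ω _ => hμ ω
  have hXYZ : entropy μ (fun ω => (X ω, Y ω, Z ω))
      = ∑ a, ∑ b, ∑ c, Real.negMulLog (F a b c) := by
    rw [entropy, Fintype.sum_prod_type]
    refine Finset.sum_congr rfl fun a _ => ?_
    rw [Fintype.sum_prod_type]
    refine Finset.sum_congr rfl fun b _ => Finset.sum_congr rfl fun c _ => ?_
    rw [hFabc]
    congr 1
    exact mass_congr fun ω => by simp [Prod.ext_iff]
  have hXZ : entropy μ (fun ω => (X ω, Z ω))
      = ∑ a, ∑ c, Real.negMulLog (∑ b, F a b c) := by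
    rw [entropy, Fintype.sum_prod_type]
    refine Finset.sum_congr rfl fun a _ => Finset.sum_congr rfl fun c _ => ?_
    congr 1
    rw [mass_congr (Q := fun ω => X ω = a ∧ Z ω = c) (fun ω => by simp [Prod.ext_iff]),
      mass_split Y]
    exact Finset.sum_congr rfl fun b _ => by rw [hFabc]; exact mass_congr fun ω => by tauto
  have hYZ : entropy μ (fun ω => (Y ω, Z ω))
      = ∑ b, ∑ c, Real.negMulLog (∑ a, F a b c) := by
    rw [entropy, Fintype.sum_prod_type]
    refine Finset.sum_congr rfl fun b _ => Finset.sum_congr rfl fun c _ => ?_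
    congr 1
    rw [mass_congr (Q := fun ω => Y ω = b ∧ Z ω = c) (fun ω => by simp [Prod.ext_iff]),
      mass_split X]
    exact Finset.sum_congr rfl fun a _ => by rw [hFabc]; exact mass_congr fun ω => by tauto
  have hZ : entropy μ Z = ∑ c, Real.negMulLog (∑ a, ∑ b, F a b c) := by
    rw [entropy]
    refine Finset.sum_congr rfl fun c _ => ?_
    congr 1
    rw [mass_split X]
    refine Finset.sum_congr rfl fun a _ => ?_
    rw [mass_split Y]
    exact Finset.sum_congr rfl fun b _ => by rw [hFabc]; exact mass_congr fun ω => by tauto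
  have hkey := gibbs3 F hFnn
  rw [condMI, hXYZ, hXZ, hYZ, hZ]
  linarith

end Nonneg


/-- Sample space for the compress-and-forward multiple-relay channel:
a value of `(x₀, (xᵢ)ᵢ, (yᵢ)ᵢ, y_{n+1}, (ŷᵢ)ᵢ)`. -/
abbrev CFOmega {n : ℕ} (X0A : Type) (XA YA : Fin n → Type) (YdA : Type)
    (YhA : Fin n → Type) : Type :=
  X0A × (∀ i, XA i) × (∀ i, YA i) × YdA × (∀ i, YhA i)

section CF

variable {n : ℕ} {X0A YdA : Type} {XA YA YhA : Fin n → Type}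

/-- The source input `X₀`. -/
def rvX0 : CFOmega X0A XA YA YdA YhA → X0A := fun ω => ω.1

/-- The tuple of relay inputs `X_S = (Xᵢ)_{i∈S}`. -/
def rvXS (S : Finset (Fin n)) : CFOmega X0A XA YA YdA YhA → (∀ i : S, XA i) :=
  fun ω i => ω.2.1 i

/-- The tuple of relay outputs `Y_S = (Yᵢ)_{i∈S}`. -/
def rvYS (S : Finset (Fin n)) : CFOmega X0A XA YA YdA YhA → (∀ i : S, YA i) :=
  fun ω i => ω.2.2.1 i

/-- The destination output `Y_{n+1}`. -/
def rvYd : CFOmega X0A XA YA YdA YhA → YdA := fun ω => ω.2.2.2.1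

/-- The tuple of compressions `Ŷ_S = (Ŷᵢ)_{i∈S}`. -/
def rvYhS (S : Finset (Fin n)) : CFOmega X0A XA YA YdA YhA → (∀ i : S, YhA i) :=
  fun ω i => ω.2.2.2.2 i

/-- The joint pmf
`p(x₀)·∏ᵢ p(xᵢ) · p(y₁,…,y_{n+1}|x₀,…,x_n) · ∏ᵢ p(ŷᵢ|yᵢ,xᵢ)`. -/
noncomputable def muCF (p0 : X0A → ℝ) (pX : ∀ i, XA i → ℝ)
    (W : X0A → (∀ i, XA i) → ((∀ i, YA i) × YdA) → ℝ)
    (κ : ∀ i, YA i → XA i → YhA i → ℝ) :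
    CFOmega X0A XA YA YdA YhA → ℝ :=
  fun ω => p0 ω.1 * (∏ i, pX i (ω.2.1 i)) * W ω.1 ω.2.1 (ω.2.2.1, ω.2.2.2.1)
    * ∏ i, κ i (ω.2.2.1 i) (ω.2.1 i) (ω.2.2.2.2 i)

lemma rvXS_eq_iff (S : Finset (Fin n)) (ω ω' : CFOmega X0A XA YA YdA YhA) :
    rvXS S ω = rvXS S ω' ↔ ∀ i ∈ S, ω.2.1 i = ω'.2.1 i := by
  unfold rvXS
  rw [funext_iff, Subtype.forall]

lemma rvYS_eq_iff (S : Finset (Fin n)) (ω ω' : CFOmega X0A XA YA YdA YhA) :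
    rvYS S ω = rvYS S ω' ↔ ∀ i ∈ S, ω.2.2.1 i = ω'.2.2.1 i := by
  unfold rvYS
  rw [funext_iff, Subtype.forall]

lemma rvYhS_eq_iff (S : Finset (Fin n)) (ω ω' : CFOmega X0A XA YA YdA YhA) :
    rvYhS S ω = rvYhS S ω' ↔ ∀ i ∈ S, ω.2.2.2.2 i = ω'.2.2.2.2 i := by
  unfold rvYhS
  rw [funext_iff, Subtype.forall]

variable [Fintype X0A] [DecidableEq X0A] [Fintype YdA] [DecidableEq YdA]
  [∀ i, Fintype (XA i)] [∀ i, DecidableEq (XA i)]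
  [∀ i, Fintype (YA i)] [∀ i, DecidableEq (YA i)]
  [∀ i, Fintype (YhA i)] [∀ i, DecidableEq (YhA i)]

/-- `I(X_S; Ŷ_{D∖S}, Y_{n+1} | X_0, X_{D∖S}) − I(Y_S; Ŷ_S | X_0, X_D, Y_{n+1}, Ŷ_{D∖S})`. -/
noncomputable def cfGap (μ : CFOmega X0A XA YA YdA YhA → ℝ) (D S : Finset (Fin n)) : ℝ :=
  condMI μ (rvXS S) (fun ω => (rvYhS (D \ S) ω, rvYd ω))
    (fun ω => (rvX0 ω, rvXS (D \ S) ω))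
  - condMI μ (rvYS S) (rvYhS S)
    (fun ω => (rvX0 ω, rvXS D ω, rvYd ω, rvYhS (D \ S) ω))

/-- `D ⊆ N` is weakly decodable if for every `S ⊆ D`,
`I(X_S; Ŷ_{D∖S}, Y_{n+1} | X_0, X_{D∖S}) − I(Y_S; Ŷ_S | X_0, X_D, Y_{n+1}, Ŷ_{D∖S}) ≥ 0`. -/
def WeaklyDecodable (μ : CFOmega X0A XA YA YdA YhA → ℝ) (D : Finset (Fin n)) : Prop :=
  ∀ S ⊆ D, 0 ≤ cfGap μ D S

/-- `D ⊆ N` is strictly decodable if for every nonempty `S ⊆ D`,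
`I(X_S; Ŷ_{D∖S}, Y_{n+1} | X_0, X_{D∖S}) − I(Y_S; Ŷ_S | X_0, X_D, Y_{n+1}, Ŷ_{D∖S}) > 0`. -/
def StrictlyDecodable (μ : CFOmega X0A XA YA YdA YhA → ℝ) (D : Finset (Fin n)) : Prop :=
  ∀ S ⊆ D, S.Nonempty → 0 < cfGap μ D S

/-- `G(T) = min_{S ⊆ T} [ I(X_0, X_S; Ŷ_{T∖S}, Y_{n+1} | X_{T∖S})
  − I(Y_S; Ŷ_S | X_0, X_T, Y_{n+1}, Ŷ_{T∖S}) ]`. -/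
noncomputable def Gfun (μ : CFOmega X0A XA YA YdA YhA → ℝ) (T : Finset (Fin n)) : ℝ :=
  T.powerset.inf' (Finset.powerset_nonempty T) fun S =>
    condMI μ (fun ω => (rvX0 ω, rvXS S ω)) (fun ω => (rvYhS (T \ S) ω, rvYd ω))
      (rvXS (T \ S))
    - condMI μ (rvYS S) (rvYhS S)
      (fun ω => (rvX0 ω, rvXS T ω, rvYd ω, rvYhS (T \ S) ω))

/-- The quantity minimized in `G`. -/
noncomputable def Fterm (μ : CFOmega X0A XA YA YdA YhA → ℝ) (T S : Finset (Fin n)) : ℝ :=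
  condMI μ (fun ω => (rvX0 ω, rvXS S ω)) (fun ω => (rvYhS (T \ S) ω, rvYd ω))
    (rvXS (T \ S))
  - condMI μ (rvYS S) (rvYhS S)
    (fun ω => (rvX0 ω, rvXS T ω, rvYd ω, rvYhS (T \ S) ω))

lemma Fterm_key (μ : CFOmega X0A XA YA YdA YhA → ℝ) (hμ : ∀ ω, 0 ≤ μ ω)
    (A B C : Finset (Fin n)) (hAB : Disjoint A B) (hAC : Disjoint A C) (hBC : Disjoint B C) :
    Fterm μ (A ∪ B ∪ C) (A ∪ B) ≤ Fterm μ (A ∪ C) A + cfGap μ (A ∪ B ∪ C) B := by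
  have hTAB : (A ∪ B ∪ C) \ (A ∪ B) = C :=
    Finset.union_sdiff_cancel_left (Finset.disjoint_union_left.mpr ⟨hAC, hBC⟩)
  have hTB : (A ∪ B ∪ C) \ B = A ∪ C := by
    rw [Finset.union_sdiff_distrib, Finset.union_sdiff_distrib,
      Finset.sdiff_self, Finset.union_empty,
      (Finset.sdiff_eq_self_iff_disjoint).mpr hAB,
      (Finset.sdiff_eq_self_iff_disjoint).mpr hBC.symm]
  have hRA : (A ∪ C) \ A = C := Finset.union_sdiff_cancel_left hAC
  -- pointwise fiber-equivalence facts
  have eXAB : ∀ ω ω' : CFOmega X0A XA YA YdA YhA,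
      rvXS (A ∪ B) ω = rvXS (A ∪ B) ω' ↔
        (rvXS A ω = rvXS A ω' ∧ rvXS B ω = rvXS B ω') := by
    intro ω ω'; simp only [rvXS_eq_iff, Finset.forall_mem_union]
  have eXAC : ∀ ω ω' : CFOmega X0A XA YA YdA YhA,
      rvXS (A ∪ C) ω = rvXS (A ∪ C) ω' ↔
        (rvXS A ω = rvXS A ω' ∧ rvXS C ω = rvXS C ω') := by
    intro ω ω'; simp only [rvXS_eq_iff, Finset.forall_mem_union]
  have eXT : ∀ ω ω' : CFOmega X0A XA YA YdA YhA,
      rvXS (A ∪ B ∪ C) ω = rvXS (A ∪ B ∪ C) ω' ↔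
        (rvXS B ω = rvXS B ω' ∧ rvXS (A ∪ C) ω = rvXS (A ∪ C) ω') := by
    intro ω ω'; simp only [rvXS_eq_iff, Finset.forall_mem_union]; tauto
  have eYhAC : ∀ ω ω' : CFOmega X0A XA YA YdA YhA,
      rvYhS (A ∪ C) ω = rvYhS (A ∪ C) ω' ↔
        (rvYhS A ω = rvYhS A ω' ∧ rvYhS C ω = rvYhS C ω') := by
    intro ω ω'; simp only [rvYhS_eq_iff, Finset.forall_mem_union]
  have eYAB : ∀ ω ω' : CFOmega X0A XA YA YdA YhA,
      rvYS (A ∪ B) ω = rvYS (A ∪ B) ω' ↔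
        (rvYS A ω = rvYS A ω' ∧ rvYS B ω = rvYS B ω') := by
    intro ω ω'; simp only [rvYS_eq_iff, Finset.forall_mem_union]
  have eYhAB : ∀ ω ω' : CFOmega X0A XA YA YdA YhA,
      rvYhS (A ∪ B) ω = rvYhS (A ∪ B) ω' ↔
        (rvYhS A ω = rvYhS A ω' ∧ rvYhS B ω = rvYhS B ω') := by
    intro ω ω'; simp only [rvYhS_eq_iff, Finset.forall_mem_union]
  -- Step 1 : P1 = Q1 + K1
  have h1 : condMI μ (fun ω => (rvX0 ω, rvXS (A ∪ B) ω)) (fun ω => (rvYhS C ω, rvYd ω)) (rvXS C)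
      = condMI μ (fun ω => (rvX0 ω, rvXS A ω)) (fun ω => (rvYhS C ω, rvYd ω)) (rvXS C)
        + condMI μ (rvXS B) (fun ω => (rvYhS C ω, rvYd ω))
            (fun ω => ((rvX0 ω, rvXS A ω), rvXS C ω)) := by
    calc condMI μ (fun ω => (rvX0 ω, rvXS (A ∪ B) ω)) (fun ω => (rvYhS C ω, rvYd ω)) (rvXS C)
        = condMI μ (fun ω => ((rvX0 ω, rvXS A ω), rvXS B ω))
            (fun ω => (rvYhS C ω, rvYd ω)) (rvXS C) :=
          condMI_congr
            (by intro ω ω'; simp only [Prod.mk.injEq, eXAB ω ω']; tauto)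
            (fun _ _ => Iff.rfl) (fun _ _ => Iff.rfl)
      _ = _ := condMI_chain_left _ _ _ _
  -- Step 2 : g1 = K1 + E1
  have h2 : condMI μ (rvXS B) (fun ω => (rvYhS (A ∪ C) ω, rvYd ω))
        (fun ω => (rvX0 ω, rvXS (A ∪ C) ω))
      = condMI μ (rvXS B) (fun ω => (rvYhS C ω, rvYd ω))
          (fun ω => ((rvX0 ω, rvXS A ω), rvXS C ω))
        + condMI μ (rvXS B) (rvYhS A)
            (fun ω => ((rvYhS C ω, rvYd ω), (rvX0 ω, rvXS (A ∪ C) ω))) := by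
    have c1 : condMI μ (rvXS B) (fun ω => (rvYhS (A ∪ C) ω, rvYd ω))
          (fun ω => (rvX0 ω, rvXS (A ∪ C) ω))
        = condMI μ (rvXS B) (fun ω => ((rvYhS C ω, rvYd ω), rvYhS A ω))
            (fun ω => (rvX0 ω, rvXS (A ∪ C) ω)) :=
      condMI_congr (fun _ _ => Iff.rfl)
        (by intro ω ω'; simp only [Prod.mk.injEq, eYhAC ω ω']; tauto)
        (fun _ _ => Iff.rfl)
    have c2 : condMI μ (rvXS B) (fun ω => ((rvYhS C ω, rvYd ω), rvYhS A ω))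
          (fun ω => (rvX0 ω, rvXS (A ∪ C) ω))
        = condMI μ (rvXS B) (fun ω => (rvYhS C ω, rvYd ω))
            (fun ω => (rvX0 ω, rvXS (A ∪ C) ω))
          + condMI μ (rvXS B) (rvYhS A)
              (fun ω => ((rvYhS C ω, rvYd ω), (rvX0 ω, rvXS (A ∪ C) ω))) :=
      condMI_chain_right _ _ _ _
    have c3 : condMI μ (rvXS B) (fun ω => (rvYhS C ω, rvYd ω))
          (fun ω => (rvX0 ω, rvXS (A ∪ C) ω))
        = condMI μ (rvXS B) (fun ω => (rvYhS C ω, rvYd ω))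
            (fun ω => ((rvX0 ω, rvXS A ω), rvXS C ω)) :=
      condMI_congr (fun _ _ => Iff.rfl) (fun _ _ => Iff.rfl)
        (by intro ω ω'; simp only [Prod.mk.injEq, eXAC ω ω']; tauto)
    rw [c1, c2, c3]
  have hE1nn : 0 ≤ condMI μ (rvXS B) (rvYhS A)
      (fun ω => ((rvYhS C ω, rvYd ω), (rvX0 ω, rvXS (A ∪ C) ω))) := condMI_nonneg hμ _ _ _
  -- Step 3 : split P2
  have h4 : condMI μ (rvYS (A ∪ B)) (rvYhS (A ∪ B))
        (fun ω => (rvX0 ω, rvXS (A ∪ B ∪ C) ω, rvYd ω, rvYhS C ω))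
      = condMI μ (fun ω => (rvYS A ω, rvYS B ω)) (rvYhS A)
          (fun ω => (rvX0 ω, rvXS (A ∪ B ∪ C) ω, rvYd ω, rvYhS C ω))
        + condMI μ (fun ω => (rvYS A ω, rvYS B ω)) (rvYhS B)
            (fun ω => (rvYhS A ω, (rvX0 ω, rvXS (A ∪ B ∪ C) ω, rvYd ω, rvYhS C ω))) := by
    calc condMI μ (rvYS (A ∪ B)) (rvYhS (A ∪ B))
          (fun ω => (rvX0 ω, rvXS (A ∪ B ∪ C) ω, rvYd ω, rvYhS C ω))
        = condMI μ (fun ω => (rvYS A ω, rvYS B ω)) (fun ω => (rvYhS A ω, rvYhS B ω))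
            (fun ω => (rvX0 ω, rvXS (A ∪ B ∪ C) ω, rvYd ω, rvYhS C ω)) :=
          condMI_congr
            (by intro ω ω'; simp only [Prod.mk.injEq, eYAB ω ω'])
            (by intro ω ω'; simp only [Prod.mk.injEq, eYhAB ω ω'])
            (fun _ _ => Iff.rfl)
      _ = _ := condMI_chain_right _ _ _ _
  -- Step 4 : g2 ≤ P2b
  have h5 : condMI μ (rvYS B) (rvYhS B)
        (fun ω => (rvX0 ω, rvXS (A ∪ B ∪ C) ω, rvYd ω, rvYhS (A ∪ C) ω))
      ≤ condMI μ (fun ω => (rvYS A ω, rvYS B ω)) (rvYhS B)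
          (fun ω => (rvYhS A ω, (rvX0 ω, rvXS (A ∪ B ∪ C) ω, rvYd ω, rvYhS C ω))) := by
    have c1 : condMI μ (fun ω => (rvYS A ω, rvYS B ω)) (rvYhS B)
          (fun ω => (rvYhS A ω, (rvX0 ω, rvXS (A ∪ B ∪ C) ω, rvYd ω, rvYhS C ω)))
        = condMI μ (fun ω => (rvYS B ω, rvYS A ω)) (rvYhS B)
            (fun ω => (rvYhS A ω, (rvX0 ω, rvXS (A ∪ B ∪ C) ω, rvYd ω, rvYhS C ω))) :=
      condMI_congr (by intro ω ω'; simp only [Prod.mk.injEq]; tauto)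
        (fun _ _ => Iff.rfl) (fun _ _ => Iff.rfl)
    have c2 : condMI μ (fun ω => (rvYS B ω, rvYS A ω)) (rvYhS B)
          (fun ω => (rvYhS A ω, (rvX0 ω, rvXS (A ∪ B ∪ C) ω, rvYd ω, rvYhS C ω)))
        = condMI μ (rvYS B) (rvYhS B)
            (fun ω => (rvYhS A ω, (rvX0 ω, rvXS (A ∪ B ∪ C) ω, rvYd ω, rvYhS C ω)))
          + condMI μ (rvYS A) (rvYhS B)
              (fun ω => (rvYS B ω,
                (rvYhS A ω, (rvX0 ω, rvXS (A ∪ B ∪ C) ω, rvYd ω, rvYhS C ω)))) :=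
      condMI_chain_left _ _ _ _
    have c3 : condMI μ (rvYS B) (rvYhS B)
          (fun ω => (rvYhS A ω, (rvX0 ω, rvXS (A ∪ B ∪ C) ω, rvYd ω, rvYhS C ω)))
        = condMI μ (rvYS B) (rvYhS B)
            (fun ω => (rvX0 ω, rvXS (A ∪ B ∪ C) ω, rvYd ω, rvYhS (A ∪ C) ω)) :=
      condMI_congr (fun _ _ => Iff.rfl) (fun _ _ => Iff.rfl)
        (by intro ω ω'; simp only [Prod.mk.injEq, eYhAC ω ω']; tauto)
    have c4 : 0 ≤ condMI μ (rvYS A) (rvYhS B)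
        (fun ω => (rvYS B ω,
          (rvYhS A ω, (rvX0 ω, rvXS (A ∪ B ∪ C) ω, rvYd ω, rvYhS C ω)))) :=
      condMI_nonneg hμ _ _ _
    linarith [c1, c2, c3, c4]
  -- Step 5 : J = E1 + P2a and Q2 ≤ J
  have h6a : condMI μ (fun ω => (rvXS B ω, (rvYS A ω, rvYS B ω))) (rvYhS A)
        (fun ω => (rvX0 ω, rvXS (A ∪ C) ω, rvYd ω, rvYhS C ω))
      = condMI μ (rvXS B) (rvYhS A)
          (fun ω => ((rvYhS C ω, rvYd ω), (rvX0 ω, rvXS (A ∪ C) ω)))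
        + condMI μ (fun ω => (rvYS A ω, rvYS B ω)) (rvYhS A)
            (fun ω => (rvX0 ω, rvXS (A ∪ B ∪ C) ω, rvYd ω, rvYhS C ω)) := by
    have c1 : condMI μ (fun ω => (rvXS B ω, (rvYS A ω, rvYS B ω))) (rvYhS A)
          (fun ω => (rvX0 ω, rvXS (A ∪ C) ω, rvYd ω, rvYhS C ω))
        = condMI μ (rvXS B) (rvYhS A)
            (fun ω => (rvX0 ω, rvXS (A ∪ C) ω, rvYd ω, rvYhS C ω))
          + condMI μ (fun ω => (rvYS A ω, rvYS B ω)) (rvYhS A)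
              (fun ω => (rvXS B ω, (rvX0 ω, rvXS (A ∪ C) ω, rvYd ω, rvYhS C ω))) :=
      condMI_chain_left _ _ _ _
    have c2 : condMI μ (rvXS B) (rvYhS A)
          (fun ω => (rvX0 ω, rvXS (A ∪ C) ω, rvYd ω, rvYhS C ω))
        = condMI μ (rvXS B) (rvYhS A)
            (fun ω => ((rvYhS C ω, rvYd ω), (rvX0 ω, rvXS (A ∪ C) ω))) :=
      condMI_congr (fun _ _ => Iff.rfl) (fun _ _ => Iff.rfl)
        (by intro ω ω'; simp only [Prod.mk.injEq]; tauto)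
    have c3 : condMI μ (fun ω => (rvYS A ω, rvYS B ω)) (rvYhS A)
          (fun ω => (rvXS B ω, (rvX0 ω, rvXS (A ∪ C) ω, rvYd ω, rvYhS C ω)))
        = condMI μ (fun ω => (rvYS A ω, rvYS B ω)) (rvYhS A)
            (fun ω => (rvX0 ω, rvXS (A ∪ B ∪ C) ω, rvYd ω, rvYhS C ω)) :=
      condMI_congr (fun _ _ => Iff.rfl) (fun _ _ => Iff.rfl)
        (by intro ω ω'; simp only [Prod.mk.injEq, eXT ω ω']; tauto)
    rw [c1, c2, c3]
  have h6b : condMI μ (rvYS A) (rvYhS A)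
        (fun ω => (rvX0 ω, rvXS (A ∪ C) ω, rvYd ω, rvYhS C ω))
      ≤ condMI μ (fun ω => (rvXS B ω, (rvYS A ω, rvYS B ω))) (rvYhS A)
          (fun ω => (rvX0 ω, rvXS (A ∪ C) ω, rvYd ω, rvYhS C ω)) := by
    have c1 : condMI μ (fun ω => (rvXS B ω, (rvYS A ω, rvYS B ω))) (rvYhS A)
          (fun ω => (rvX0 ω, rvXS (A ∪ C) ω, rvYd ω, rvYhS C ω))
        = condMI μ (fun ω => (rvYS A ω, (rvXS B ω, rvYS B ω))) (rvYhS A)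
            (fun ω => (rvX0 ω, rvXS (A ∪ C) ω, rvYd ω, rvYhS C ω)) :=
      condMI_congr (by intro ω ω'; simp only [Prod.mk.injEq]; tauto)
        (fun _ _ => Iff.rfl) (fun _ _ => Iff.rfl)
    have c2 : condMI μ (fun ω => (rvYS A ω, (rvXS B ω, rvYS B ω))) (rvYhS A)
          (fun ω => (rvX0 ω, rvXS (A ∪ C) ω, rvYd ω, rvYhS C ω))
        = condMI μ (rvYS A) (rvYhS A)
            (fun ω => (rvX0 ω, rvXS (A ∪ C) ω, rvYd ω, rvYhS C ω))
          + condMI μ (fun ω => (rvXS B ω, rvYS B ω)) (rvYhS A)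
              (fun ω => (rvYS A ω, (rvX0 ω, rvXS (A ∪ C) ω, rvYd ω, rvYhS C ω))) :=
      condMI_chain_left _ _ _ _
    have c3 : 0 ≤ condMI μ (fun ω => (rvXS B ω, rvYS B ω)) (rvYhS A)
        (fun ω => (rvYS A ω, (rvX0 ω, rvXS (A ∪ C) ω, rvYd ω, rvYhS C ω))) :=
      condMI_nonneg hμ _ _ _
    linarith [c1, c2, c3]
  -- assemble
  have eF1 : Fterm μ (A ∪ B ∪ C) (A ∪ B)
      = condMI μ (fun ω => (rvX0 ω, rvXS (A ∪ B) ω)) (fun ω => (rvYhS C ω, rvYd ω)) (rvXS C)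
        - condMI μ (rvYS (A ∪ B)) (rvYhS (A ∪ B))
            (fun ω => (rvX0 ω, rvXS (A ∪ B ∪ C) ω, rvYd ω, rvYhS C ω)) := by
    rw [Fterm, hTAB]
  have eF2 : Fterm μ (A ∪ C) A
      = condMI μ (fun ω => (rvX0 ω, rvXS A ω)) (fun ω => (rvYhS C ω, rvYd ω)) (rvXS C)
        - condMI μ (rvYS A) (rvYhS A)
            (fun ω => (rvX0 ω, rvXS (A ∪ C) ω, rvYd ω, rvYhS C ω)) := by
    rw [Fterm, hRA]
  have eG : cfGap μ (A ∪ B ∪ C) B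
      = condMI μ (rvXS B) (fun ω => (rvYhS (A ∪ C) ω, rvYd ω))
          (fun ω => (rvX0 ω, rvXS (A ∪ C) ω))
        - condMI μ (rvYS B) (rvYhS B)
            (fun ω => (rvX0 ω, rvXS (A ∪ B ∪ C) ω, rvYd ω, rvYhS (A ∪ C) ω)) := by
    rw [cfGap, hTB]
  rw [eF1, eF2, eG]
  linarith [h1, h2, h4, h5, h6a, h6b, hE1nn]

lemma Gfun_eq_inf'_Fterm (μ : CFOmega X0A XA YA YdA YhA → ℝ) (T : Finset (Fin n)) :
    Gfun μ T = T.powerset.inf' (Finset.powerset_nonempty T) (fun S => Fterm μ T S) := rfl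


end CF

/-- If `T ⊆ N` is not contained in the unique largest weakly
decodable subset `D'` of `N`, then `G(T) < max_{T' ⊆ N} G(T')`. -/
theorem Gfun_lt_max_of_not_subset_largest_weaklyDecodable
    {n : ℕ} {X0A YdA : Type} {XA YA YhA : Fin n → Type}
    [Fintype X0A] [DecidableEq X0A] [Fintype YdA] [DecidableEq YdA]
    [∀ i, Fintype (XA i)] [∀ i, DecidableEq (XA i)]
    [∀ i, Fintype (YA i)] [∀ i, DecidableEq (YA i)]
    [∀ i, Fintype (YhA i)] [∀ i, DecidableEq (YhA i)]
    (p0 : X0A → ℝ) (pX : ∀ i, XA i → ℝ)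
    (W : X0A → (∀ i, XA i) → ((∀ i, YA i) × YdA) → ℝ)
    (κ : ∀ i, YA i → XA i → YhA i → ℝ)
    (hp0 : ∀ x, 0 ≤ p0 x) (hp0s : ∑ x, p0 x = 1)
    (hpX : ∀ i x, 0 ≤ pX i x) (hpXs : ∀ i, ∑ x, pX i x = 1)
    (hW : ∀ x0 x y, 0 ≤ W x0 x y) (hWs : ∀ x0 x, ∑ y, W x0 x y = 1)
    (hκ : ∀ i y x yh, 0 ≤ κ i y x yh) (hκs : ∀ i y x, ∑ yh, κ i y x yh = 1)
    (D' : Finset (Fin n))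
    (hD' : WeaklyDecodable (muCF p0 pX W κ) D')
    (hD'max : ∀ E : Finset (Fin n), WeaklyDecodable (muCF p0 pX W κ) E → E ⊆ D')
    (T : Finset (Fin n)) (hT : ¬ T ⊆ D') :
    Gfun (muCF p0 pX W κ) T <
      (Finset.univ : Finset (Fin n)).powerset.sup'
        (Finset.powerset_nonempty _) (Gfun (muCF p0 pX W κ)) := by
  have hμ : ∀ ω, 0 ≤ muCF p0 pX W κ ω := by
    intro ω
    unfold muCF
    refine mul_nonneg (mul_nonneg (mul_nonneg (hp0 _) ?_) (hW _ _ _)) ?_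
    · exact Finset.prod_nonneg fun i _ => hpX i _
    · exact Finset.prod_nonneg fun i _ => hκ i _ _ _
  -- T is not weakly decodable
  have hTnd : ¬ WeaklyDecodable (muCF p0 pX W κ) T := fun h => hT (hD'max T h)
  simp only [WeaklyDecodable, not_forall, not_le] at hTnd
  obtain ⟨B, hBT, hBneg⟩ := hTnd
  -- minimizer of Gfun on R = T \ B
  obtain ⟨A, hAmem, hAeq⟩ :=
    Finset.exists_mem_eq_inf' (Finset.powerset_nonempty (T \ B))
      (fun S => Fterm (muCF p0 pX W κ) (T \ B) S)
  have hA : A ⊆ T \ B := Finset.mem_powerset.mp hAmem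
  have hABd : Disjoint A B := Finset.sdiff_disjoint.mono_left hA
  have hACd : Disjoint A ((T \ B) \ A) := Finset.disjoint_sdiff
  have hBCd : Disjoint B ((T \ B) \ A) :=
    (Finset.sdiff_disjoint.mono_left (Finset.sdiff_subset (t := A))).symm
  have hACR : A ∪ ((T \ B) \ A) = T \ B := Finset.union_sdiff_of_subset hA
  have hTeq : A ∪ B ∪ ((T \ B) \ A) = T := by
    rw [Finset.union_right_comm, hACR, Finset.sdiff_union_of_subset hBT]
  have key := Fterm_key (muCF p0 pX W κ) hμ A B ((T \ B) \ A) hABd hACd hBCd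
  rw [hTeq, hACR] at key
  -- Gfun T ≤ Fterm T (A ∪ B)
  have h7 : Gfun (muCF p0 pX W κ) T ≤ Fterm (muCF p0 pX W κ) T (A ∪ B) := by
    rw [Gfun_eq_inf'_Fterm]
    refine Finset.inf'_le _ (Finset.mem_powerset.mpr ?_)
    exact Finset.union_subset ((hA.trans (Finset.sdiff_subset))) hBT
  have h8 : Gfun (muCF p0 pX W κ) (T \ B) = Fterm (muCF p0 pX W κ) (T \ B) A := by
    rw [Gfun_eq_inf'_Fterm]
    exact hAeq
  have h9 : Gfun (muCF p0 pX W κ) (T \ B) ≤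
      (Finset.univ : Finset (Fin n)).powerset.sup'
        (Finset.powerset_nonempty _) (Gfun (muCF p0 pX W κ)) :=
    Finset.le_sup' _ (Finset.mem_powerset.mpr (Finset.subset_univ _))
  linarith [key, hBneg, h7, h8, h9]
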